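/- The Ewens–Pitman sampling formula as the shape law of the exchangeable partition probability function. Let 0 ≤ α < 1 and θ > −α, and let π ∈ 𝒫_n with n ≥ 1. Then Σ_{A set partition of {1,…,n} with shape(A) = π} EPPF_{α,θ}(A) = PSF_{α,θ}(π); equivalently, the number of set partitions of {1,…,n} with shape π equals C(π), and each such set partition receives the same EPPF weight. -/
import Mathlib


open scoped Classical
open Finset

noncomputable section
set_option maxHeartbeats 1000000

/-- Rising factorial `a_{(b)} = a(a+1)⋯(a+b−1)`, with `a_{(0)} = 1`. -/
def risingFac (a : ℝ) (b : ℕ) : ℝ := ∏ i ∈ Finset.range b, (a + i)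

/-- The combinatorial coefficient `C(π)` of an integer partition, given by its multiset of
parts: `C(π) = |π|! / (∏ᵢ πᵢ! · ∏_j a_j(π)!)`. -/
def Cc (s : Multiset ℕ) : ℝ :=
  (Nat.factorial s.sum : ℝ) /
    (((s.map Nat.factorial).prod : ℝ) * ∏ j ∈ s.toFinset, (Nat.factorial (s.count j) : ℝ))

/-- `P(π | x) = C(π) · Σ_{i₁ ≠ ⋯ ≠ i_d} x_{i₁}^{π₁} ⋯ x_{i_d}^{π_d}`, the sum running over
all tuples of pairwise distinct indices (i.e. over injections). -/
def Plik (s : Multiset ℕ) (x : ℕ → ℝ) : ℝ :=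
  Cc s * ∑' f : Fin s.toList.length ↪ ℕ,
    ∏ j : Fin s.toList.length, x (f j) ^ s.toList.get j

/-- The multiset of nonzero entries of a finite sequence of naturals. -/
def nzMulti {k : ℕ} (z : Fin k → ℕ) : Multiset ℕ :=
  Multiset.filter (· ≠ 0) ↑(List.ofFn z)

/-- `z` encodes a valid pair `(z, y)` (with `y j = μ j - z j`) splitting `μ` into `ω` and `γ`. -/
def IsSplit (ω γ μ : Multiset ℕ) (z : Fin μ.toList.length → ℕ) : Prop :=
  (∀ j, z j ≤ μ.toList.get j) ∧ nzMulti z = ω ∧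
    nzMulti (fun j => μ.toList.get j - z j) = γ

/-- The hypergeometric splitting coefficient `H(ω, γ | μ)`. -/
def Hcoef (ω γ μ : Multiset ℕ) : ℝ :=
  ((μ.sum.choose ω.sum : ℕ) : ℝ)⁻¹ *
    ∑ᶠ z : Fin μ.toList.length → ℕ,
      if IsSplit ω γ μ z then
        ((∏ j : Fin μ.toList.length, (μ.toList.get j).choose (z j) : ℕ) : ℝ)
      else 0

/-- `μ ∈ coag(ω, γ)`. -/
def memCoag (ω γ μ : Multiset ℕ) : Prop := ∃ z, IsSplit ω γ μ z

/-- The Ewens–Pitman sampling formula `PSF_{α,θ}(π)`, for a partition given by its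
multiset of parts. -/
def PSF (α θ : ℝ) (s : Multiset ℕ) : ℝ :=
  Cc s * ((∏ i ∈ Finset.range s.card, (θ + i * α)) / risingFac θ s.sum) *
    (s.map (fun p => risingFac (1 - α) (p - 1))).prod

/-- Set partitions of `{1, …, N}`. -/
abbrev SP (N : ℕ) := Finpartition (Finset.univ : Finset (Fin N))

instance {N : ℕ} : Fintype (SP N) :=
  Fintype.ofInjective Finpartition.parts (fun a b h => by
    cases a; cases b; simpa using h)

/-- The Ewens–Pitman exchangeable partition probability function. -/
def EPPF (α θ : ℝ) {N : ℕ} (P : SP N) : ℝ :=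
  ((∏ i ∈ Finset.range P.parts.card, (θ + i * α)) / risingFac θ N) *
    ∏ b ∈ P.parts, risingFac (1 - α) (b.card - 1)

/-- The shape of a set partition: the multiset of its block sizes. -/
def shape {N : ℕ} (P : SP N) : Multiset ℕ := P.parts.val.map Finset.card

/-- The shape of the restriction `A|_B` of a set partition to `B`: the multiset of sizes
of the nonempty intersections of the blocks with `B`. -/
def rshape {N : ℕ} (P : SP N) (B : Finset (Fin N)) : Multiset ℕ :=
  ((P.parts.val.map (· ∩ B)).filter (· ≠ ∅)).map Finset.card

/-- The subset `{1, …, n}` of `{1, …, n + m}`. -/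
def firstBlock (n m : ℕ) : Finset (Fin (n + m)) :=
  Finset.univ.filter (fun i => (i : ℕ) < n)

/-- The subset `{n + 1, …, n + m}` of `{1, …, n + m}`. -/
def secondBlock (n m : ℕ) : Finset (Fin (n + m)) :=
  Finset.univ.filter (fun i => n ≤ (i : ℕ))

/-- **The Ewens–Pitman sampling formula as the shape law of the EPPF**: the total EPPF
mass of set partitions of `{1,…,n}` with shape `π` equals `PSF_{α,θ}(π)`; equivalently,
there are exactly `C(π)` set partitions of shape `π`, each receiving the same EPPF
weight. -/
lemma card_fiber_eq_count {ι : Type*} [Fintype ι] (u : ι → ℕ) (j : ℕ) :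
    Nat.card {i // u i = j} = (Finset.univ.val.map u).count j := by
  classical
  rw [Nat.card_eq_fintype_card, Fintype.card_subtype, Multiset.count_map,
    Finset.card_def, Finset.filter_val]
  congr 1
  exact Multiset.filter_congr (fun x _ => ⟨Eq.symm, Eq.symm⟩)

lemma exists_matching {ι κ γ : Type*} [Fintype ι] [Fintype κ] (u : ι → γ) (v : κ → γ)
    (h : ∀ j, Nat.card {x // u x = j} = Nat.card {y // v y = j}) :
    ∃ e : ι ≃ κ, ∀ i, v (e i) = u i := by
  classical
  refine ⟨Equiv.ofFiberEquiv (f := u) (g := v)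
    (fun j => Fintype.equivOfCardEq ?_), fun i => Equiv.ofFiberEquiv_map _ i⟩
  rw [← Nat.card_eq_fintype_card, ← Nat.card_eq_fintype_card]
  exact h j

lemma card_eq_card_mul {β γ : Type*} [Fintype β] [Fintype γ] (φ : β → γ) (c : ℕ)
    (hc : ∀ g : γ, Nat.card {b // φ b = g} = c) :
    Fintype.card β = Fintype.card γ * c := by
  classical
  rw [← Fintype.card_congr (Equiv.sigmaFiberEquiv φ), Fintype.card_sigma]
  simp only [← Nat.card_eq_fintype_card, hc]
  simp [Finset.sum_const, mul_comm, Nat.card_eq_fintype_card]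

lemma fp_ext {n : ℕ} (a b : SP n) (h : a.parts = b.parts) : a = b := by
  cases a; cases b; simpa using h

-- Step 2
lemma step2 {n k : ℕ} (s : Multiset ℕ) (lval : Fin k → ℕ)
    (hmap : (Finset.univ.val.map lval : Multiset ℕ) = s)
    (hpos : ∀ p ∈ s, 0 < p) :
    Fintype.card {f : Fin n → Fin k // ∀ i, Nat.card {x // f x = i} = lval i} =
      Fintype.card {A : SP n // shape A = s} *
        ∏ j ∈ s.toFinset, Nat.factorial (s.count j) := by
  classical
  set F := {f : Fin n → Fin k // ∀ i, Nat.card {x // f x = i} = lval i} with hF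
  have hcount : ∀ j, Nat.card {i : Fin k // lval i = j} = s.count j := fun j => by
    rw [card_fiber_eq_count, hmap]
  have himage : Finset.univ.image lval = s.toFinset := by
    ext j
    simp only [Finset.mem_image, Finset.mem_univ, true_and, Multiset.mem_toFinset]
    constructor
    · rintro ⟨i, rfl⟩
      rw [← hmap]
      exact Multiset.mem_map_of_mem _ (Finset.mem_univ_val _)
    · intro hj
      rw [← hmap] at hj
      obtain ⟨i, _, rfl⟩ := Multiset.mem_map.mp hj
      exact ⟨i, rfl⟩
  have hlpos : ∀ i, 0 < lval i := fun i => by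
    apply hpos
    rw [← hmap]
    exact Multiset.mem_map_of_mem _ (Finset.mem_univ_val _)
  -- the fiber finsets of f : F
  have hptcard : ∀ (f : F) (i : Fin k),
      (Finset.univ.filter (fun x => f.1 x = i)).card = lval i := fun f i => by
    rw [← Fintype.card_subtype, ← Nat.card_eq_fintype_card]
    exact f.2 i
  have hptmem : ∀ (f : F) (i : Fin k) (x : Fin n),
      x ∈ Finset.univ.filter (fun y => f.1 y = i) ↔ f.1 x = i := fun f i x => by
    simp
  have hptne : ∀ (f : F) (i : Fin k),
      (Finset.univ.filter (fun x => f.1 x = i)).Nonempty := fun f i => by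
    rw [← Finset.card_pos, hptcard]
    exact hlpos i
  have hptinj : ∀ f : F, Function.Injective
      (fun i => Finset.univ.filter (fun x => f.1 x = i)) := by
    intro f i i' h
    obtain ⟨x, hx⟩ := hptne f i
    have hx' : x ∈ Finset.univ.filter (fun y => f.1 y = i') := by
      rw [show Finset.univ.filter (fun y => f.1 y = i') =
        Finset.univ.filter (fun y => f.1 y = i) from h.symm]
      exact hx
    rw [hptmem] at hx hx'
    rw [← hx, hx']
  -- the partition associated to f : F
  have mkP : ∀ f : F, {P : SP n //
      P.parts = Finset.univ.image (fun i => Finset.univ.filter (fun x => f.1 x = i))} := by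
    intro f
    refine ⟨⟨Finset.univ.image (fun i => Finset.univ.filter (fun x => f.1 x = i)), ?_, ?_, ?_⟩, rfl⟩
    · rw [Finset.supIndep_iff_pairwiseDisjoint]
      rintro a ha b hb hab
      simp only [Finset.coe_image, Set.mem_image, Finset.coe_univ, Set.image_univ,
        Set.mem_range] at ha hb
      obtain ⟨i, rfl⟩ := ha
      obtain ⟨i', rfl⟩ := hb
      refine Finset.disjoint_left.mpr (fun x hx hx' => ?_)
      simp only [id_eq, hptmem] at hx hx'
      exact hab (by rw [← hx, hx'])
    · apply le_antisymm
      · exact Finset.sup_le fun b _ => Finset.le_iff_subset.mpr (Finset.subset_univ _)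
      · intro x _
        rw [Finset.mem_sup]
        exact ⟨_, Finset.mem_image_of_mem _ (Finset.mem_univ (f.1 x)),
          (hptmem f (f.1 x) x).mpr rfl⟩
    · rw [Finset.bot_eq_empty]
      intro hmem
      obtain ⟨i, _, hi⟩ := Finset.mem_image.mp hmem
      exact Finset.nonempty_iff_ne_empty.mp (hptne f i) hi
  have hshapeP : ∀ f : F, shape (mkP f).1 = s := by
    intro f
    rw [shape, (mkP f).2, Finset.image_val_of_injOn ((hptinj f).injOn),
      Multiset.map_map]
    rw [← hmap]
    exact Multiset.map_congr rfl (fun i _ => hptcard f i)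
  let Ψ : F → {A : SP n // shape A = s} := fun f => ⟨(mkP f).1, hshapeP f⟩
  have hkcard : Multiset.card s = k := by
    rw [← hmap, Multiset.card_map]
    simp [← Finset.card_def]
  refine card_eq_card_mul Ψ _ (fun A => ?_)
  -- fiber over A
  have hApc : A.1.parts.card = k := by
    have h1 : Multiset.card (shape A.1) = Multiset.card s := by rw [A.2]
    rw [shape, Multiset.card_map] at h1
    rw [Finset.card_def, h1, hkcard]
  have hAcount : ∀ j, Nat.card {b : {b // b ∈ A.1.parts} // b.1.card = j} = s.count j := by
    intro j
    rw [card_fiber_eq_count]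
    congr 1
    rw [Finset.univ_eq_attach, Finset.attach_val]
    exact (Multiset.attach_map_val' _ _).trans A.2
  -- key construction: from a size-preserving labelling to an element of the fiber
  have key : ∀ g : Fin k ≃ {b // b ∈ A.1.parts}, (∀ i, (g i).1.card = lval i) →
      ∃ f : F, Ψ f = A ∧ ∀ i, Finset.univ.filter (fun x => f.1 x = i) = (g i).1 := by
    intro g hg
    have hexu : ∀ x : Fin n, ∃! i, x ∈ (g i).1 := by
      intro x
      obtain ⟨b, hb, hxb⟩ := A.1.exists_mem (Finset.mem_univ x)
      refine ⟨g.symm ⟨b, hb⟩, by simpa using hxb, ?_⟩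
      intro i hi
      have h3 : (g i).1 = b := A.1.eq_of_mem_parts (g i).2 hb hi hxb
      apply g.injective
      apply Subtype.ext
      simpa using h3
    set f0 : Fin n → Fin k := fun x => Fintype.choose _ (hexu x) with hf0def
    have hf0 : ∀ x, x ∈ (g (f0 x)).1 := fun x => Fintype.choose_spec _ (hexu x)
    have hf0u : ∀ x i, x ∈ (g i).1 → f0 x = i := fun x i h =>
      (hexu x).unique (hf0 x) h
    have hfib0 : ∀ i, Finset.univ.filter (fun x => f0 x = i) = (g i).1 := by
      intro i
      ext x
      simp only [Finset.mem_filter, Finset.mem_univ, true_and]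
      exact ⟨fun h => h ▸ hf0 x, fun h => hf0u x i h⟩
    have hf0F : ∀ i, Nat.card {x // f0 x = i} = lval i := fun i => by
      rw [Nat.card_eq_fintype_card, Fintype.card_subtype, hfib0, hg i]
    refine ⟨⟨f0, hf0F⟩, ?_, hfib0⟩
    apply Subtype.ext
    apply fp_ext
    show (mkP ⟨f0, hf0F⟩).1.parts = A.1.parts
    rw [(mkP ⟨f0, hf0F⟩).2]
    ext b
    simp only [Finset.mem_image, Finset.mem_univ, true_and]
    constructor
    · rintro ⟨i, rfl⟩
      rw [show Finset.univ.filter (fun x => (⟨f0, hf0F⟩ : F).1 x = i) = (g i).1 from hfib0 i]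
      exact (g i).2
    · intro hb
      exact ⟨g.symm ⟨b, hb⟩, by rw [hfib0]; simp⟩
  -- the fiber is in bijection with size-preserving labellings
  set G := {g : Fin k ≃ {b // b ∈ A.1.parts} // ∀ i, ((g : Fin k ≃ {b // b ∈ A.1.parts}) i).1.card = lval i} with hG
  choose fΘ hΘ1 hΘ2 using (fun g : G => key g.1 g.2)
  have hcardfib : Nat.card {f : F // Ψ f = A} = Nat.card G := by
    rw [Nat.card_eq_of_bijective (fun g : G => (⟨fΘ g, hΘ1 g⟩ : {f : F // Ψ f = A}))]
    constructor
    · intro g g' hgg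
      have h4 : fΘ g = fΘ g' := congrArg Subtype.val hgg
      apply Subtype.ext
      apply Equiv.ext
      intro i
      apply Subtype.ext
      rw [← hΘ2 g i, ← hΘ2 g' i, h4]
    · rintro ⟨f, hf⟩
      have hAparts : A.1.parts = Finset.univ.image
          (fun i => Finset.univ.filter (fun x => f.1 x = i)) := by
        rw [← (mkP f).2]
        exact congrArg (fun X => X.1.parts) hf.symm
      have hmem : ∀ i, Finset.univ.filter (fun x => f.1 x = i) ∈ A.1.parts := by
        intro i
        rw [hAparts]
        exact Finset.mem_image_of_mem _ (Finset.mem_univ i)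
      have hbij : Function.Bijective
          (fun i => (⟨Finset.univ.filter (fun x => f.1 x = i), hmem i⟩ :
            {b // b ∈ A.1.parts})) := by
        rw [Fintype.bijective_iff_injective_and_card]
        constructor
        · intro i i' h
          exact hptinj f (congrArg Subtype.val h)
        · rw [Fintype.card_coe, hApc, Fintype.card_fin]
      refine ⟨⟨Equiv.ofBijective _ hbij, fun i => hptcard f i⟩, ?_⟩
      apply Subtype.ext
      show fΘ _ = f
      set g : G := ⟨Equiv.ofBijective _ hbij, fun i => hptcard f i⟩ with hgdef
      apply Subtype.ext
      funext x
      have h5 : x ∈ Finset.univ.filter (fun y => (fΘ g).1 y = (fΘ g).1 x) := by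
        simp
      rw [hΘ2 g ((fΘ g).1 x)] at h5
      have h6 : (g.1 ((fΘ g).1 x)).1 =
          Finset.univ.filter (fun y => f.1 y = (fΘ g).1 x) := rfl
      rw [h6] at h5
      exact ((hptmem f _ x).mp h5).symm
  rw [hcardfib]
  -- count G via the stabilizer
  obtain ⟨g0, hg0⟩ := exists_matching lval (fun b : {b // b ∈ A.1.parts} => b.1.card)
    (fun j => by rw [hcount j, hAcount j])
  have hGE : G ≃ {ρ : Equiv.Perm (Fin k) // lval ∘ ρ = lval} := by
    refine ⟨fun g => ⟨g.1.trans g0.symm, ?_⟩, fun ρ => ⟨ρ.1.trans g0, ?_⟩, fun g => ?_, fun ρ => ?_⟩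
    · funext i
      show lval (g0.symm (g.1 i)) = lval i
      rw [← hg0 (g0.symm (g.1 i)), Equiv.apply_symm_apply, g.2 i]
    · intro i
      show (g0 (ρ.1 i)).1.card = lval i
      rw [hg0 (ρ.1 i)]
      exact congrFun ρ.2 i
    · apply Subtype.ext; apply Equiv.ext; intro i; simp
    · apply Subtype.ext; apply Equiv.ext; intro i; simp
  rw [Nat.card_congr hGE, Nat.card_eq_fintype_card, DomMulAct.stabilizer_card' lval, himage]
  refine Finset.prod_congr rfl (fun j _ => ?_)
  rw [← Nat.card_eq_fintype_card, hcount j]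

lemma card_fst_fiber {k : ℕ} (u : Fin k → ℕ) (i : Fin k) :
    Nat.card {p : Σ j, Fin (u j) // p.1 = i} = u i := by
  classical
  have e : Fin (u i) ≃ {p : Σ j, Fin (u j) // p.1 = i} :=
    Equiv.ofBijective (fun b => ⟨⟨i, b⟩, rfl⟩)
      (by
        constructor
        · intro a b hab
          simpa using hab
        · rintro ⟨⟨j, b⟩, (rfl : j = i)⟩
          exact ⟨b, rfl⟩)
  rw [← Nat.card_congr e, Nat.card_eq_fintype_card, Fintype.card_fin]

lemma step1 {n k : ℕ} (lval : Fin k → ℕ) (base : Fin n → Fin k)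
    (hbase : ∀ i, Nat.card {x // base x = i} = lval i) :
    Nat.factorial n =
      Fintype.card {f : Fin n → Fin k // ∀ i, Nat.card {x // f x = i} = lval i} *
        ∏ i, Nat.factorial (lval i) := by
  classical
  set F := {f : Fin n → Fin k // ∀ i, Nat.card {x // f x = i} = lval i} with hF
  have hφ : ∀ (σ : Equiv.Perm (Fin n)) (i : Fin k),
      Nat.card {x // base (σ x) = i} = lval i := fun σ i => by
    rw [← hbase i]
    exact Nat.card_congr (σ.subtypeEquiv fun x => Iff.rfl)
  let φ : Equiv.Perm (Fin n) → F := fun σ => ⟨fun x => base (σ x), hφ σ⟩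
  have key : ∀ f : F, Nat.card {σ // φ σ = f} = ∏ i, Nat.factorial (lval i) := by
    intro f
    obtain ⟨e, he⟩ := exists_matching f.1 base (fun j => by rw [f.2 j, hbase j])
    have hE : {σ // φ σ = f} ≃ {ρ : Equiv.Perm (Fin n) // base ∘ ρ = base} := by
      refine ⟨fun σ => ⟨e.symm.trans σ.1, ?_⟩, fun ρ => ⟨e.trans ρ.1, ?_⟩, fun σ => ?_, fun ρ => ?_⟩
      · funext x
        have h1 : ∀ y, base (σ.1 y) = f.1 y := fun y =>
          congrFun (congrArg Subtype.val σ.2) y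
        simp only [Function.comp_apply, Equiv.trans_apply, h1, ← he, Equiv.apply_symm_apply]
      · apply Subtype.ext
        funext x
        have h1 : ∀ y, base (ρ.1 y) = base y := fun y => congrFun ρ.2 y
        show base (ρ.1 (e x)) = f.1 x
        rw [h1, he]
      · apply Subtype.ext; apply Equiv.ext; intro x; simp
      · apply Subtype.ext; apply Equiv.ext; intro x; simp
    rw [Nat.card_congr hE, Nat.card_eq_fintype_card, DomMulAct.stabilizer_card base]
    refine Finset.prod_congr rfl fun i _ => ?_
    rw [← Nat.card_eq_fintype_card, hbase i]
  calc Nat.factorial n = Fintype.card (Equiv.Perm (Fin n)) := by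
        rw [Fintype.card_perm, Fintype.card_fin]
    _ = Fintype.card F * ∏ i, Nat.factorial (lval i) := card_eq_card_mul φ _ key


lemma card_shape_mul (s : Multiset ℕ) {n : ℕ} (hsum : s.sum = n) (hpos : ∀ p ∈ s, 0 < p) :
    Nat.factorial n = Fintype.card {A : SP n // shape A = s} *
      ((∏ j ∈ s.toFinset, Nat.factorial (s.count j)) * (s.map Nat.factorial).prod) := by
  classical
  set k := s.toList.length with hk
  set lval : Fin k → ℕ := s.toList.get with hl
  have hmap : (Finset.univ.val.map lval : Multiset ℕ) = s := by
    have h1 : (Finset.univ.val : Multiset (Fin k)) = ↑(List.finRange k) := rfl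
    rw [h1, Multiset.map_coe, List.map_get_finRange, Multiset.coe_toList]
  have hsum' : ∑ i, lval i = n := by
    rw [← hsum, Finset.sum_eq_multiset_sum, hmap]
  have hcard_sig : Fintype.card (Σ i, Fin (lval i)) = n := by
    rw [Fintype.card_sigma]
    simpa using hsum'
  let e0 : Fin n ≃ Σ i, Fin (lval i) :=
    Fintype.equivOfCardEq (by rw [Fintype.card_fin, hcard_sig])
  have hbase : ∀ i, Nat.card {x // (fun y => (e0 y).1) x = i} = lval i := fun i => by
    rw [← card_fst_fiber lval i]
    exact Nat.card_congr (e0.subtypeEquiv fun x => Iff.rfl)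
  have h1 := step1 lval (fun y => (e0 y).1) hbase
  have h2 := step2 (n := n) s lval hmap hpos
  have h3 : ∏ i, Nat.factorial (lval i) = (s.map Nat.factorial).prod := by
    rw [← hmap, Multiset.map_map, Finset.prod_eq_multiset_prod]
    rfl
  rw [h1, h2, h3]
  ring

theorem psf_is_shape_law {α θ : ℝ} (hα0 : 0 ≤ α) (hα1 : α < 1) (hθ : -α < θ)
    {n : ℕ} (hn : 1 ≤ n) (π : Nat.Partition n) :
    (∑ A ∈ Finset.univ.filter (fun A : SP n => shape A = π.parts), EPPF α θ A
        = PSF α θ π.parts) ∧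
    (((Finset.univ.filter (fun A : SP n => shape A = π.parts)).card : ℝ) = Cc π.parts) ∧
    (∀ A ∈ Finset.univ.filter (fun A : SP n => shape A = π.parts),
      ∀ B ∈ Finset.univ.filter (fun A : SP n => shape A = π.parts),
        EPPF α θ A = EPPF α θ B) := by
  classical
  set s := π.parts with hs
  have hsum : s.sum = n := π.parts_sum
  have hpos : ∀ p ∈ s, 0 < p := fun p hp => π.parts_pos hp
  have hnat := card_shape_mul s hsum hpos
  have hcard0 : (Finset.univ.filter (fun A : SP n => shape A = s)).card
      = Fintype.card {A : SP n // shape A = s} := (Fintype.card_subtype _).symm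
  have hp1 : 0 < (s.map Nat.factorial).prod := by
    apply Multiset.prod_pos
    intro a ha
    obtain ⟨b, _, rfl⟩ := Multiset.mem_map.mp ha
    exact Nat.factorial_pos b
  have hp2 : 0 < ∏ j ∈ s.toFinset, Nat.factorial (s.count j) :=
    Finset.prod_pos fun j _ => Nat.factorial_pos _
  have hcardR : ((Finset.univ.filter (fun A : SP n => shape A = s)).card : ℝ) = Cc s := by
    rw [Cc, hsum, hcard0, eq_div_iff]
    · rw [hnat]
      push_cast
      ring
    · have e1 : (0:ℝ) < ((s.map Nat.factorial).prod : ℕ) := by exact_mod_cast hp1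
      have e2 : (0:ℝ) < ∏ j ∈ s.toFinset, (Nat.factorial (s.count j) : ℝ) := by
        rw [← Nat.cast_prod]
        exact_mod_cast hp2
      positivity
  have hcardsk : ∀ A : SP n, shape A = s → A.parts.card = Multiset.card s := by
    intro A hA
    have h4 := congrArg Multiset.card hA
    rw [shape, Multiset.card_map] at h4
    rw [Finset.card_def, h4]
  have hprod : ∀ A : SP n, shape A = s →
      ∏ b ∈ A.parts, risingFac (1 - α) (b.card - 1) =
        (s.map (fun p => risingFac (1 - α) (p - 1))).prod := by
    intro A hA
    rw [← hA, shape, Multiset.map_map, Finset.prod_eq_multiset_prod]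
    rfl
  have hE : ∀ A ∈ Finset.univ.filter (fun A : SP n => shape A = s),
      EPPF α θ A = ((∏ i ∈ Finset.range (Multiset.card s), (θ + i * α)) / risingFac θ n) *
        (s.map (fun p => risingFac (1 - α) (p - 1))).prod := by
    intro A hA
    rw [Finset.mem_filter] at hA
    rw [EPPF, hcardsk A hA.2, hprod A hA.2]
  refine ⟨?_, hcardR, ?_⟩
  · rw [Finset.sum_congr rfl hE, Finset.sum_const, nsmul_eq_mul, hcardR, PSF, hsum]
    ring
  · intro A hA B hB
    rw [hE A hA, hE B hB]

end
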